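/- If p_n > 1 for all n (and sup_n p_n < ∞), the space l(r,s,t,p;Δ) with the Luxemburg norm is rotund (strictly convex): for every x with ‖x‖ = 1 and y, z in the closed unit ball with x = (y+z)/2, one has y = z. -/

import Mathlib

open Finset Filter Topology ENNReal

/-- The difference operator `Δ` with the convention `x₋₁ = 0`. -/
def del (x : ℕ → ℝ) (k : ℕ) : ℝ :=
  x k - if k = 0 then 0 else x (k - 1)

/-- The generalized-means-of-differences transform `(A(r,s,t)·Δ)x`. -/
noncomputable def Amap (r s t : ℕ → ℝ) (x : ℕ → ℝ) (n : ℕ) : ℝ :=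
  (1 / r n) * ∑ k ∈ Finset.range (n + 1), s (n - k) * t k * del x k

/-- The modular `σ_p` on `l(r,s,t,p;Δ)`, with values in `[0,∞]`. -/
noncomputable def sigmaP (r s t p : ℕ → ℝ) (x : ℕ → ℝ) : ℝ≥0∞ :=
  ∑' n, ENNReal.ofReal (|Amap r s t x n| ^ p n)

/-- The space `l(r,s,t,p;Δ)`. -/
def lrstp (r s t p : ℕ → ℝ) : Set (ℕ → ℝ) :=
  {x | sigmaP r s t p x < ⊤}

/-- The paranorm `h̃` on `l(r,s,t,p;Δ)`. -/
noncomputable def htilde (r s t p : ℕ → ℝ) (M : ℝ) (x : ℕ → ℝ) : ℝ :=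
  ((sigmaP r s t p x).toReal) ^ (1 / M)

/-- The Luxemburg norm on `l(r,s,t,p;Δ)`. -/
noncomputable def lux (r s t p : ℕ → ℝ) (x : ℕ → ℝ) : ℝ :=
  sInf {c : ℝ | 0 < c ∧ sigmaP r s t p (c⁻¹ • x) ≤ 1}

private lemma del_add (y z : ℕ → ℝ) (k : ℕ) : del (y + z) k = del y k + del z k := by
  simp only [del, Pi.add_apply]; split_ifs <;> ring

private lemma del_smul (c : ℝ) (y : ℕ → ℝ) (k : ℕ) : del (c • y) k = c * del y k := by
  simp only [del, Pi.smul_apply, smul_eq_mul]; split_ifs <;> ring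

private lemma Amap_add (r s t : ℕ → ℝ) (y z : ℕ → ℝ) (n : ℕ) :
    Amap r s t (y + z) n = Amap r s t y n + Amap r s t z n := by
  simp only [Amap, del_add]
  rw [← mul_add, ← Finset.sum_add_distrib]
  congr 1; apply Finset.sum_congr rfl; intro k _; ring

private lemma Amap_smul (r s t : ℕ → ℝ) (c : ℝ) (y : ℕ → ℝ) (n : ℕ) :
    Amap r s t (c • y) n = c * Amap r s t y n := by
  simp only [Amap, del_smul]
  rw [Finset.mul_sum, Finset.mul_sum, Finset.mul_sum]
  apply Finset.sum_congr rfl; intro k _; ring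

private lemma del_eq_of_Amap_eq (r s t : ℕ → ℝ) (hr : ∀ n, r n ≠ 0) (ht : ∀ n, t n ≠ 0)
    (hs0 : s 0 ≠ 0) (y z : ℕ → ℝ) (h : ∀ n, Amap r s t y n = Amap r s t z n) :
    ∀ n, del y n = del z n := by
  intro n
  induction n using Nat.strong_induction_on with
  | _ n ih =>
    have h1 : ∑ k ∈ Finset.range (n + 1), s (n - k) * t k * del y k
        = ∑ k ∈ Finset.range (n + 1), s (n - k) * t k * del z k := by
      have h2 := h n
      simp only [Amap] at h2
      exact mul_left_cancel₀ (one_div_ne_zero (hr n)) h2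
    rw [Finset.sum_range_succ, Finset.sum_range_succ] at h1
    have h3 : ∑ k ∈ Finset.range n, s (n - k) * t k * del y k
        = ∑ k ∈ Finset.range n, s (n - k) * t k * del z k := by
      apply Finset.sum_congr rfl; intro k hk
      rw [ih k (Finset.mem_range.mp hk)]
    rw [h3] at h1
    have h4 : s (n - n) * t n * del y n = s (n - n) * t n * del z n := by linarith
    simp only [Nat.sub_self] at h4
    exact mul_left_cancel₀ (mul_ne_zero hs0 (ht n)) h4

private lemma eq_of_del_eq (y z : ℕ → ℝ) (h : ∀ n, del y n = del z n) : y = z := by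
  funext n
  induction n with
  | zero => have := h 0; simpa [del] using this
  | succ n ih =>
    have := h (n + 1)
    simp only [del, Nat.succ_ne_zero, if_false, Nat.add_sub_cancel] at this
    linarith

private lemma conv_le {q : ℝ} (hq : 1 ≤ q) (b c : ℝ) :
    |(b + c) / 2| ^ q ≤ (|b| ^ q + |c| ^ q) / 2 := by
  have h1 : |(b + c) / 2| ≤ (|b| + |c|) / 2 := by
    rw [abs_div, abs_two]
    apply div_le_div_of_nonneg_right (abs_add_le b c)
    norm_num
  have h2 : |(b + c) / 2| ^ q ≤ ((|b| + |c|) / 2) ^ q :=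
    Real.rpow_le_rpow (abs_nonneg _) h1 (le_trans zero_le_one hq)
  refine h2.trans ?_
  have h3 := (convexOn_rpow hq).2 (Set.mem_Ici.mpr (abs_nonneg b)) (Set.mem_Ici.mpr (abs_nonneg c))
    (by norm_num : (0:ℝ) ≤ 1/2) (by norm_num : (0:ℝ) ≤ 1/2) (by norm_num)
  simp only [smul_eq_mul] at h3
  calc ((|b| + |c|) / 2) ^ q = (1/2 * |b| + 1/2 * |c|) ^ q := by ring_nf
    _ ≤ 1/2 * |b| ^ q + 1/2 * |c| ^ q := h3
    _ = (|b| ^ q + |c| ^ q) / 2 := by ring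

private lemma conv_lt {q : ℝ} (hq : 1 < q) {b c : ℝ} (h : b ≠ c) :
    |(b + c) / 2| ^ q < (|b| ^ q + |c| ^ q) / 2 := by
  rcases eq_or_ne |b| |c| with hbc | hbc
  · have hb : b = -c := by
      rcases abs_eq_abs.mp hbc with h' | h'
      · exact absurd h' h
      · exact h'
    subst hb
    have hc0 : c ≠ 0 := by rintro rfl; exact h (by ring)
    have : (-c + c) / 2 = 0 := by ring
    rw [this, abs_zero, Real.zero_rpow (by positivity)]
    have : 0 < |c| ^ q := Real.rpow_pos_of_pos (abs_pos.mpr hc0) q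
    rw [abs_neg]
    linarith
  · have h2 := (strictConvexOn_rpow hq).2 (Set.mem_Ici.mpr (abs_nonneg b))
      (Set.mem_Ici.mpr (abs_nonneg c)) hbc (by norm_num : (0:ℝ) < 1/2)
      (by norm_num : (0:ℝ) < 1/2) (by norm_num)
    simp only [smul_eq_mul] at h2
    have h1 : |(b + c) / 2| ^ q ≤ ((|b| + |c|) / 2) ^ q := by
      apply Real.rpow_le_rpow (abs_nonneg _) _ (le_trans zero_le_one hq.le)
      rw [abs_div, abs_two]
      apply div_le_div_of_nonneg_right (abs_add_le b c)
      norm_num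
    calc |(b + c) / 2| ^ q ≤ ((|b| + |c|) / 2) ^ q := h1
      _ = (1/2 * |b| + 1/2 * |c|) ^ q := by ring_nf
      _ < 1/2 * |b| ^ q + 1/2 * |c| ^ q := h2
      _ = (|b| ^ q + |c| ^ q) / 2 := by ring

private lemma sigmaP_smul_le (r s t p : ℕ → ℝ) (x : ℕ → ℝ) {c K : ℝ} (hc : 0 < c)
    (hK : ∀ n, c⁻¹ ^ p n ≤ K) :
    sigmaP r s t p (c⁻¹ • x) ≤ ENNReal.ofReal K * sigmaP r s t p x := by
  simp only [sigmaP]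
  rw [← ENNReal.tsum_mul_left]
  apply ENNReal.tsum_le_tsum
  intro n
  rw [Amap_smul]
  have hcn : (0:ℝ) < c⁻¹ := inv_pos.mpr hc
  have h1 : |c⁻¹ * Amap r s t x n| ^ p n = c⁻¹ ^ p n * |Amap r s t x n| ^ p n := by
    rw [abs_mul, abs_of_pos hcn, Real.mul_rpow hcn.le (abs_nonneg _)]
  rw [h1, ← ENNReal.ofReal_mul (le_trans (Real.rpow_nonneg hcn.le _) (hK n))]
  exact ENNReal.ofReal_le_ofReal
    (mul_le_mul_of_nonneg_right (hK n) (Real.rpow_nonneg (abs_nonneg _) _))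

private lemma sigmaP_anti (r s t p : ℕ → ℝ) (hp0 : ∀ n, 0 ≤ p n) (x : ℕ → ℝ)
    {c c' : ℝ} (hc : 0 < c) (hcc : c ≤ c') :
    sigmaP r s t p (c'⁻¹ • x) ≤ sigmaP r s t p (c⁻¹ • x) := by
  apply ENNReal.tsum_le_tsum
  intro n
  apply ENNReal.ofReal_le_ofReal
  rw [Amap_smul, Amap_smul]
  apply Real.rpow_le_rpow (abs_nonneg _) _ (hp0 n)
  rw [abs_mul, abs_mul]
  apply mul_le_mul_of_nonneg_right _ (abs_nonneg _)
  rw [abs_of_pos (inv_pos.mpr hc), abs_of_pos (inv_pos.mpr (lt_of_lt_of_le hc hcc))]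
  exact inv_anti₀ hc hcc

private lemma lux_set_nonempty (r s t p : ℕ → ℝ) (hp : ∀ n, 1 < p n) (x : ℕ → ℝ)
    (hx : sigmaP r s t p x < ⊤) :
    {c : ℝ | 0 < c ∧ sigmaP r s t p (c⁻¹ • x) ≤ 1}.Nonempty := by
  set sv : ℝ := (sigmaP r s t p x).toReal with hsv
  have hsv0 : 0 ≤ sv := ENNReal.toReal_nonneg
  refine ⟨max 1 sv + 1, ?_, ?_⟩
  · positivity
  · have hc1 : (1:ℝ) ≤ max 1 sv + 1 := by
      have := le_max_left 1 sv; linarith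
    have hc0 : (0:ℝ) < max 1 sv + 1 := by linarith
    have hK : ∀ n, (max 1 sv + 1)⁻¹ ^ p n ≤ (max 1 sv + 1)⁻¹ := by
      intro n
      have := Real.rpow_le_rpow_of_exponent_ge (inv_pos.mpr hc0)
        (inv_le_one_of_one_le₀ hc1) (le_of_lt (hp n))
      simpa [Real.rpow_one] using this
    refine le_trans (sigmaP_smul_le r s t p x hc0 hK) ?_
    rw [← ENNReal.ofReal_toReal hx.ne, ← hsv, ← ENNReal.ofReal_mul (by positivity)]
    apply ENNReal.ofReal_le_one.mpr
    rw [inv_mul_le_iff₀ hc0, mul_one]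
    have := le_max_right 1 sv; linarith

private lemma sigma_le_one_of_lux_le_one (r s t p : ℕ → ℝ) (M : ℝ) (hp : ∀ n, 1 < p n)
    (hpM : ∀ n, p n ≤ M) (x : ℕ → ℝ) (hx : sigmaP r s t p x < ⊤)
    (h1 : lux r s t p x ≤ 1) : sigmaP r s t p x ≤ 1 := by
  set S := {c : ℝ | 0 < c ∧ sigmaP r s t p (c⁻¹ • x) ≤ 1} with hS
  have hne : S.Nonempty := lux_set_nonempty r s t p hp x hx
  have hbdd : BddBelow S := ⟨0, fun c hc => hc.1.le⟩
  -- every c > 1 is in S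
  have hmem : ∀ c : ℝ, 1 < c → sigmaP r s t p (c⁻¹ • x) ≤ 1 := by
    intro c hc
    obtain ⟨c0, hc0S, hc0lt⟩ := exists_lt_of_csInf_lt hne (lt_of_le_of_lt h1 hc)
    exact le_trans (sigmaP_anti r s t p (fun n => le_of_lt (lt_trans one_pos (hp n))) x
      hc0S.1 hc0lt.le) hc0S.2
  -- σ(x) ≤ ofReal (c ^ M) for all c > 1
  have hbound : ∀ c : ℝ, 1 < c → sigmaP r s t p x ≤ ENNReal.ofReal (c ^ M) := by
    intro c hc
    have hc0 : (0:ℝ) < c := lt_trans one_pos hc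
    have hx' : x = (c⁻¹)⁻¹ • (c⁻¹ • x) := by
      rw [smul_smul, inv_inv, mul_inv_cancel₀ hc0.ne', one_smul]
    have hK : ∀ n, (c⁻¹)⁻¹ ^ p n ≤ c ^ M := by
      intro n
      rw [inv_inv]
      exact Real.rpow_le_rpow_of_exponent_le hc.le (hpM n)
    calc sigmaP r s t p x = sigmaP r s t p ((c⁻¹)⁻¹ • (c⁻¹ • x)) := by rw [← hx']
      _ ≤ ENNReal.ofReal (c ^ M) * sigmaP r s t p (c⁻¹ • x) :=
          sigmaP_smul_le r s t p (c⁻¹ • x) (inv_pos.mpr hc0) hK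
      _ ≤ ENNReal.ofReal (c ^ M) * 1 := mul_le_mul_right (hmem c hc) _
      _ = ENNReal.ofReal (c ^ M) := mul_one _
  -- take the limit c → 1⁺
  have hcont : ContinuousAt (fun c : ℝ => c ^ M) 1 :=
    Real.continuousAt_rpow_const 1 M (Or.inl one_ne_zero)
  have htend : Tendsto (fun c : ℝ => ENNReal.ofReal (c ^ M)) (𝓝[>] 1) (𝓝 1) := by
    have h2 : Tendsto (fun c : ℝ => ENNReal.ofReal (c ^ M)) (𝓝 1) (𝓝 (ENNReal.ofReal (1 ^ M))) :=
      (ENNReal.continuous_ofReal.continuousAt.comp hcont)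
    rw [Real.one_rpow, ENNReal.ofReal_one] at h2
    exact h2.mono_left nhdsWithin_le_nhds
  refine ge_of_tendsto htend ?_
  filter_upwards [self_mem_nhdsWithin] with c hc
  exact hbound c hc

private lemma lux_lt_one_of_sigma_lt_one (r s t p : ℕ → ℝ) (M : ℝ) (hp : ∀ n, 1 < p n)
    (hpM : ∀ n, p n ≤ M) (x : ℕ → ℝ) (hσ : sigmaP r s t p x < 1) :
    lux r s t p x < 1 := by
  have hM1 : 1 < M := lt_of_lt_of_le (hp 0) (hpM 0)
  have hM0 : (0:ℝ) < M := lt_trans one_pos hM1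
  set sv : ℝ := (sigmaP r s t p x).toReal with hsv
  have hsvlt : sv < 1 := by
    rw [hsv, ← ENNReal.toReal_one]
    exact ENNReal.toReal_strict_mono one_ne_top hσ
  have hsv0 : 0 ≤ sv := ENNReal.toReal_nonneg
  set c : ℝ := (sv ^ (1 / M) + 1) / 2 with hcdef
  have hroot0 : 0 ≤ sv ^ (1 / M) := Real.rpow_nonneg hsv0 _
  have hroot1 : sv ^ (1 / M) < 1 := by
    rcases eq_or_lt_of_le hsv0 with h0 | h0
    · rw [← h0, Real.zero_rpow (by positivity)]; norm_num
    · exact Real.rpow_lt_one hsv0 hsvlt (by positivity)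
  have hc0 : 0 < c := by rw [hcdef]; linarith
  have hc1 : c < 1 := by rw [hcdef]; linarith
  have hcroot : sv ^ (1 / M) ≤ c := by rw [hcdef]; linarith
  have hcM : sv ≤ c ^ M := by
    calc sv = (sv ^ (1 / M)) ^ M := by
          rw [← Real.rpow_mul hsv0, one_div_mul_cancel hM0.ne', Real.rpow_one]
      _ ≤ c ^ M := Real.rpow_le_rpow hroot0 hcroot hM0.le
  have hK : ∀ n, c⁻¹ ^ p n ≤ c⁻¹ ^ M := by
    intro n
    exact Real.rpow_le_rpow_of_exponent_le ((one_le_inv₀ hc0).2 hc1.le) (hpM n)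
  have hmem : c ∈ {c : ℝ | 0 < c ∧ sigmaP r s t p (c⁻¹ • x) ≤ 1} := by
    refine ⟨hc0, ?_⟩
    refine le_trans (sigmaP_smul_le r s t p x hc0 hK) ?_
    rw [← ENNReal.ofReal_toReal (lt_trans hσ one_lt_top).ne, ← hsv,
      ← ENNReal.ofReal_mul (Real.rpow_nonneg (inv_pos.mpr hc0).le M)]
    apply ENNReal.ofReal_le_one.mpr
    rw [Real.inv_rpow hc0.le]
    have hcMpos : 0 < c ^ M := Real.rpow_pos_of_pos hc0 M
    rw [inv_mul_le_iff₀ hcMpos, mul_one]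
    exact hcM
  calc lux r s t p x ≤ c := csInf_le ⟨0, fun d hd => hd.1.le⟩ hmem
    _ < 1 := hc1

theorem lrstp_rotund
    (r s t p : ℕ → ℝ) (hr : ∀ n, r n ≠ 0) (ht : ∀ n, t n ≠ 0) (hs0 : s 0 ≠ 0)
    (M : ℝ) (hp : ∀ n, 1 < p n) (hpM : ∀ n, p n ≤ M)
    (x y z : ℕ → ℝ)
    (hx : x ∈ lrstp r s t p) (hy : y ∈ lrstp r s t p) (hz : z ∈ lrstp r s t p)
    (hx1 : lux r s t p x = 1) (hy1 : lux r s t p y ≤ 1) (hz1 : lux r s t p z ≤ 1)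
    (hmid : x = (1 / 2 : ℝ) • (y + z)) :
    y = z := by
  simp only [lrstp, Set.mem_setOf_eq] at hx hy hz
  by_contra hne
  have hAne : ¬ ∀ n, Amap r s t y n = Amap r s t z n := by
    intro hA
    exact hne (eq_of_del_eq y z (del_eq_of_Amap_eq r s t hr ht hs0 y z hA))
  push_neg at hAne
  obtain ⟨n0, hn0⟩ := hAne
  have ha : ∀ n, Amap r s t x n = (Amap r s t y n + Amap r s t z n) / 2 := by
    intro n
    rw [hmid, Amap_smul, Amap_add]; ring
  have hσy : sigmaP r s t p y ≤ 1 := sigma_le_one_of_lux_le_one r s t p M hp hpM y hy hy1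
  have hσz : sigmaP r s t p z ≤ 1 := sigma_le_one_of_lux_le_one r s t p M hp hpM z hz hz1
  set δ : ℝ := (|Amap r s t y n0| ^ p n0 + |Amap r s t z n0| ^ p n0) / 2
      - |(Amap r s t y n0 + Amap r s t z n0) / 2| ^ p n0 with hδ
  have hδpos : 0 < δ := by
    have := conv_lt (hp n0) hn0
    rw [hδ]; linarith
  have key : ∀ n, 2 * ENNReal.ofReal (|Amap r s t x n| ^ p n)
      + (if n = n0 then ENNReal.ofReal (2 * δ) else 0)
      ≤ ENNReal.ofReal (|Amap r s t y n| ^ p n) + ENNReal.ofReal (|Amap r s t z n| ^ p n) := by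
    intro n
    rw [ha n]
    by_cases h : n = n0
    · subst h
      rw [if_pos rfl]
      have e1 : (2:ℝ≥0∞) * ENNReal.ofReal (|(Amap r s t y n + Amap r s t z n) / 2| ^ p n)
          + ENNReal.ofReal (2 * δ)
          = ENNReal.ofReal (2 * |(Amap r s t y n + Amap r s t z n) / 2| ^ p n + 2 * δ) := by
        rw [ENNReal.ofReal_add (by positivity) (by linarith),
          ENNReal.ofReal_mul (by norm_num : (0:ℝ) ≤ 2), ENNReal.ofReal_ofNat,
          ENNReal.ofReal_mul (by norm_num : (0:ℝ) ≤ 2), ENNReal.ofReal_ofNat]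
      rw [e1, ← ENNReal.ofReal_add (by positivity) (by positivity)]
      apply ENNReal.ofReal_le_ofReal
      rw [hδ]; ring_nf
      apply le_of_eq; ring
    · rw [if_neg h, add_zero]
      have e1 : (2:ℝ≥0∞) * ENNReal.ofReal (|(Amap r s t y n + Amap r s t z n) / 2| ^ p n)
          = ENNReal.ofReal (2 * |(Amap r s t y n + Amap r s t z n) / 2| ^ p n) := by
        rw [ENNReal.ofReal_mul (by norm_num : (0:ℝ) ≤ 2), ENNReal.ofReal_ofNat]
      rw [e1, ← ENNReal.ofReal_add (by positivity) (by positivity)]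
      apply ENNReal.ofReal_le_ofReal
      have := conv_le (hp n).le (Amap r s t y n) (Amap r s t z n)
      linarith
  have hsum : 2 * sigmaP r s t p x + ENNReal.ofReal (2 * δ)
      ≤ sigmaP r s t p y + sigmaP r s t p z := by
    have h1 := ENNReal.tsum_le_tsum key
    rwa [ENNReal.tsum_add, ENNReal.tsum_add, ENNReal.tsum_mul_left, tsum_ite_eq] at h1
  have h2 : 2 * sigmaP r s t p x + ENNReal.ofReal (2 * δ) ≤ 2 := by
    refine hsum.trans ?_
    calc sigmaP r s t p y + sigmaP r s t p z ≤ 1 + 1 := add_le_add hσy hσz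
      _ = 2 := by norm_num
  have hlt : 2 * sigmaP r s t p x < 2 * sigmaP r s t p x + ENNReal.ofReal (2 * δ) :=
    ENNReal.lt_add_right (ENNReal.mul_ne_top ENNReal.ofNat_ne_top hx.ne)
      (by simp [ENNReal.ofReal_pos.mpr (by linarith : (0:ℝ) < 2 * δ) |>.ne', hδpos])
  have hσx : sigmaP r s t p x < 1 := by
    have h3 : 2 * sigmaP r s t p x < 2 * 1 := by
      calc 2 * sigmaP r s t p x < 2 * sigmaP r s t p x + ENNReal.ofReal (2 * δ) := hlt
        _ ≤ 2 := h2
        _ = 2 * 1 := (mul_one 2).symm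
    exact (ENNReal.mul_lt_mul_iff_right (two_ne_zero) ENNReal.ofNat_ne_top).mp h3
  have := lux_lt_one_of_sigma_lt_one r s t p M hp hpM x hσx
  rw [hx1] at this
  exact lt_irrefl 1 this
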